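/- arXiv:2009.11275 — 6 statements merged into one kernel-verified Lean document; each statement's English description precedes it below -/
import Mathlib

section
/- Let Ω ⊂ ℝ^d be a bounded convex open set containing a ball of radius r > 0. Then the closure of Ω satisfies an interior cone condition with radius r and angle θ = 2 arcsin(r / (2 diam Ω)). -/
open Metric Set

/-- The cone with apex `x`, direction `ξ`, height `r` and opening angle `θ`. -/
noncomputable def cone {d : ℕ} (x ξ : EuclideanSpace ℝ (Fin d)) (r θ : ℝ) :
    Set (EuclideanSpace ℝ (Fin d)) :=
  {z | ∃ (y : EuclideanSpace ℝ (Fin d)) (lam : ℝ), ‖y‖ = 1 ∧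
    Real.cos θ ≤ (inner ℝ y ξ : ℝ) ∧ lam ∈ Set.Icc 0 r ∧ z = x + lam • y}

set_option maxHeartbeats 1000000 in
/-- A bounded convex open set containing a ball of radius `r` has a closure satisfying
an interior cone condition with radius `r` and angle `θ = 2 arcsin(r / (2 diam Ω))`. -/
theorem closure_convex_coneCondition {d : ℕ} (hd : 0 < d)
    (Ω : Set (EuclideanSpace ℝ (Fin d))) (hΩb : Bornology.IsBounded Ω)
    (hΩc : Convex ℝ Ω) (hΩo : IsOpen Ω)
    (z : EuclideanSpace ℝ (Fin d)) (r : ℝ) (hr : 0 < r) (hball : ball z r ⊆ Ω) :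
    ∀ x ∈ closure Ω, ∃ ξ : EuclideanSpace ℝ (Fin d), ‖ξ‖ = 1 ∧
      cone x ξ r (2 * Real.arcsin (r / (2 * Metric.diam Ω))) ⊆ closure Ω := by
  intro x hx
  set D := Metric.diam Ω with hDdef
  have hDb : Bornology.IsBounded (closure Ω) := hΩb.closure
  have hz : z ∈ Ω := hball (mem_ball_self hr)
  have hcb : closedBall z r ⊆ closure Ω := by
    rw [← closure_ball z hr.ne']
    exact closure_mono hball
  have hconv : Convex ℝ (closure Ω) := hΩc.closure
  -- a unit vector
  set e : EuclideanSpace ℝ (Fin d) := EuclideanSpace.single ⟨0, hd⟩ (1 : ℝ) with he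
  have hnorme : ‖e‖ = 1 := by simp [he]
  have hD0 : 0 ≤ D := Metric.diam_nonneg
  -- r ≤ D
  have hrD : r ≤ D := by
    by_contra hlt
    push_neg at hlt
    set t : ℝ := (D + r) / 2 with ht
    have ht0 : 0 < t := by positivity
    have htr : t < r := by rw [ht]; linarith
    have hmem : z + t • e ∈ ball z r := by
      rw [mem_ball, dist_eq_norm]
      simp only [add_sub_cancel_left, norm_smul, hnorme, mul_one]
      rwa [Real.norm_eq_abs, abs_of_pos ht0]
    have hdist : dist (z + t • e) z ≤ D := Metric.dist_le_diam_of_mem hΩb (hball hmem) hz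
    rw [dist_eq_norm] at hdist
    simp only [add_sub_cancel_left, norm_smul, hnorme, mul_one] at hdist
    rw [Real.norm_eq_abs, abs_of_pos ht0] at hdist
    rw [ht] at hdist; linarith
  have hDpos : 0 < D := lt_of_lt_of_le hr hrD
  set θ : ℝ := 2 * Real.arcsin (r / (2 * D)) with hθdef
  have htle : r / (2 * D) ≤ 1 / 2 := by
    rw [div_le_div_iff₀ (by positivity) (by norm_num)]
    linarith
  have ht0' : 0 ≤ r / (2 * D) := by positivity
  have hcosθ : Real.cos θ = 1 - 2 * (r / (2 * D)) ^ 2 := by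
    rw [hθdef, Real.cos_two_mul, Real.cos_arcsin, Real.sq_sqrt (by nlinarith)]
    ring
  have hcoshalf : (1 : ℝ) / 2 ≤ Real.cos θ := by
    rw [hcosθ]; nlinarith
  by_cases hxz : x = z
  · -- apex at the center: everything in the cone is in the closed ball
    refine ⟨e, hnorme, ?_⟩
    rintro p ⟨y, lam, hy, _, ⟨hlam0, hlamr⟩, rfl⟩
    apply hcb
    rw [mem_closedBall, dist_eq_norm, hxz]
    simp only [add_sub_cancel_left, norm_smul, hy, mul_one]
    rwa [Real.norm_eq_abs, abs_of_nonneg hlam0]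
  · set h : ℝ := ‖z - x‖ with hhdef
    have hh0 : 0 < h := by
      rw [hhdef, norm_pos_iff, sub_ne_zero]
      exact fun hzx => hxz hzx.symm
    refine ⟨h⁻¹ • (z - x), ?_, ?_⟩
    · rw [norm_smul, Real.norm_eq_abs, abs_of_pos (inv_pos.mpr hh0), ← hhdef,
        inv_mul_cancel₀ hh0.ne']
    rintro p ⟨y, lam, hy, hyξ, ⟨hlam0, hlamr⟩, rfl⟩
    set c : ℝ := (inner ℝ y (h⁻¹ • (z - x)) : ℝ) with hcdef
    have hinner : (inner ℝ y (z - x) : ℝ) = h * c := by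
      rw [hcdef, real_inner_smul_right]
      field_simp
    have hcθ : Real.cos θ ≤ c := hyξ
    have hhD : h ≤ D := by
      have hzc : z ∈ closure Ω := subset_closure hz
      have := Metric.dist_le_diam_of_mem hDb hzc hx
      rwa [dist_eq_norm, Metric.diam_closure] at this
    rcases le_or_gt lam h with hcase | hcase
    · -- lam ≤ h : p is on the segment from x to x + h • y, the latter in closedBall z r
      have hkey : x + h • y ∈ closedBall z r := by
        rw [mem_closedBall, dist_eq_norm]
        have heq : x + h • y - z = h • y - (z - x) := by abel
        rw [heq]
        have hsq : ‖h • y - (z - x)‖ ^ 2 = 2 * h ^ 2 - 2 * h ^ 2 * c := by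
          rw [norm_sub_sq_real, inner_smul_left, norm_smul, hy, Real.norm_eq_abs,
            abs_of_pos hh0]
          simp only [RCLike.star_def, conj_trivial, hinner, ← hhdef]
          ring
        have hsqle : ‖h • y - (z - x)‖ ^ 2 ≤ r ^ 2 := by
          rw [hsq]
          have h1 : 2 * h ^ 2 - 2 * h ^ 2 * c ≤ 2 * h ^ 2 * (1 - Real.cos θ) := by
            nlinarith [sq_nonneg h]
          have h2 : 1 - Real.cos θ = 2 * (r / (2 * D)) ^ 2 := by rw [hcosθ]; ring
          have h3 : h ^ 2 ≤ D ^ 2 := by nlinarith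
          calc 2 * h ^ 2 - 2 * h ^ 2 * c ≤ 2 * h ^ 2 * (2 * (r / (2 * D)) ^ 2) := by
                rw [← h2]; exact h1
            _ = h ^ 2 * r ^ 2 / D ^ 2 := by field_simp
            _ ≤ D ^ 2 * r ^ 2 / D ^ 2 := by
                apply div_le_div_of_nonneg_right _ (by positivity)
                nlinarith
            _ = r ^ 2 := by field_simp
        nlinarith [norm_nonneg (h • y - (z - x))]
      have hmem2 : x + h • y ∈ closure Ω := hcb hkey
      have hcomb := hconv hx hmem2 (a := 1 - lam / h) (b := lam / h)
        (by rw [sub_nonneg]; exact div_le_one_of_le₀ hcase hh0.le)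
        (by positivity) (by ring)
      have heq2 : (1 - lam / h) • x + (lam / h) • (x + h • y) = x + lam • y := by
        rw [smul_add, smul_smul, div_mul_cancel₀ _ hh0.ne']
        module
      rwa [heq2] at hcomb
    · -- h < lam : p itself is in closedBall z r
      apply hcb
      rw [mem_closedBall, dist_eq_norm]
      have heq : x + lam • y - z = lam • y - (z - x) := by abel
      rw [heq]
      have hsq : ‖lam • y - (z - x)‖ ^ 2 = lam ^ 2 - 2 * lam * h * c + h ^ 2 := by
        rw [norm_sub_sq_real, inner_smul_left, norm_smul, hy, Real.norm_eq_abs,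
          abs_of_nonneg hlam0]
        simp only [RCLike.star_def, conj_trivial, hinner, ← hhdef]
        ring
      have hchalf : (1 : ℝ) / 2 ≤ c := le_trans hcoshalf hcθ
      have hsqle : ‖lam • y - (z - x)‖ ^ 2 ≤ r ^ 2 := by
        rw [hsq]
        nlinarith [mul_nonneg hlam0 hh0.le]
      nlinarith [norm_nonneg (lam • y - (z - x))]
end

section
/- Let K ⊂ ℝ^d be a nonempty compact set and r : K → (0, ∞) an upper semi-continuous function. Then there exist finitely many points y₁, …, y_N ∈ K such that: (i) the open ℓ^∞-cubes Q_i = B^∞(y_i, r(y_i)) cover K; (ii) the cubes B^∞(y_i, r(y_i)/2) are pairwise disjoint; (iii) every point y ∈ ℝ^d is contained in at most 2^d of the cubes Q_i. -/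
open Metric Set

/-- The open `ℓ^∞`-cube of radius `ρ` centered at `x`. -/
def cubeInfty {d : ℕ} (x : EuclideanSpace ℝ (Fin d)) (ρ : ℝ) :
    Set (EuclideanSpace ℝ (Fin d)) :=
  {z | ∀ i, |z i - x i| < ρ}

lemma cubeInfty_isOpen {d : ℕ} (x : EuclideanSpace ℝ (Fin d)) (ρ : ℝ) :
    IsOpen (cubeInfty x ρ) := by
  have h : cubeInfty x ρ = ⋂ i, (fun z : EuclideanSpace ℝ (Fin d) => z i) ⁻¹' {t | |t - x i| < ρ} := by
    ext z; simp [cubeInfty]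
  rw [h]
  exact isOpen_iInter_of_finite fun i =>
    (isOpen_lt ((continuous_id.sub continuous_const).abs) continuous_const).preimage (PiLp.continuous_apply 2 _ i)

lemma coord_le_dist {d : ℕ} (u v : EuclideanSpace ℝ (Fin d)) (c : Fin d) :
    |u c - v c| ≤ dist u v := by
  rw [EuclideanSpace.dist_eq]
  have h1 : |u c - v c| = Real.sqrt (dist (u c) (v c) ^ 2) := by
    rw [Real.sqrt_sq dist_nonneg, Real.dist_eq]
  rw [h1]
  apply Real.sqrt_le_sqrt
  exact Finset.single_le_sum (f := fun i => dist (u i) (v i) ^ 2)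
    (fun i _ => sq_nonneg _) (Finset.mem_univ c)

lemma usc_exists_max {α : Type*} [TopologicalSpace α] {S : Set α} (hSc : IsCompact S)
    (hSne : S.Nonempty) {f : α → ℝ} (hf : UpperSemicontinuousOn f S) :
    ∃ a ∈ S, ∀ x ∈ S, f x ≤ f a := by
  by_contra h
  push_neg at h
  choose g hgS hglt using h
  have hU : ∀ x (hx : x ∈ S), ∃ u : Set α, IsOpen u ∧ x ∈ u ∧ ∀ z ∈ u ∩ S, f z < f (g x hx) := by
    intro x hx
    have := hf x hx (f (g x hx)) (hglt x hx)
    rw [eventually_nhdsWithin_iff] at this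
    obtain ⟨u, hu, huo, hxu⟩ := mem_nhds_iff.1 this
    exact ⟨u, huo, hxu, fun z hz => hu hz.1 hz.2⟩
  choose u huo hxu hub using hU
  obtain ⟨t, ht⟩ := hSc.elim_nhds_subcover' (fun x hx => u x hx)
    (fun x hx => (huo x hx).mem_nhds (hxu x hx))
  have htne : t.Nonempty := by
    obtain ⟨x, hx⟩ := hSne
    obtain ⟨y, hy, -⟩ := Set.mem_iUnion₂.1 (ht hx)
    exact ⟨y, hy⟩
  obtain ⟨x₀, hx₀t, hx₀max⟩ := t.exists_max_image (fun x => f (g x.1 x.2)) htne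
  have hgx₀ : g x₀.1 x₀.2 ∈ S := hgS _ _
  obtain ⟨y, hyt, hymem⟩ := Set.mem_iUnion₂.1 (ht hgx₀)
  exact absurd ((hub y.1 y.2 _ ⟨hymem, hgx₀⟩).trans_le (hx₀max y hyt)) (lt_irrefl _)

/-- Efficient covering of a compact set by cubes whose radii are prescribed by an upper
semi-continuous positive function: the cubes cover `K`, the half-cubes are pairwise
disjoint, and every point of `ℝ^d` lies in at most `2^d` of the cubes. -/
theorem efficient_cube_covering {d : ℕ} (hd : 0 < d)
    (K : Set (EuclideanSpace ℝ (Fin d))) (hK : IsCompact K) (hne : K.Nonempty)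
    (r : EuclideanSpace ℝ (Fin d) → ℝ) (hrpos : ∀ x ∈ K, 0 < r x)
    (husc : UpperSemicontinuousOn r K) :
    ∃ (N : ℕ) (y : Fin N → EuclideanSpace ℝ (Fin d)),
      (∀ i, y i ∈ K) ∧
      K ⊆ ⋃ i, cubeInfty (y i) (r (y i)) ∧
      (Set.univ : Set (Fin N)).Pairwise
        (fun i j => Disjoint (cubeInfty (y i) (r (y i) / 2)) (cubeInfty (y j) (r (y j) / 2))) ∧
      ∀ z : EuclideanSpace ℝ (Fin d),
        Nat.card {i : Fin N // z ∈ cubeInfty (y i) (r (y i))} ≤ 2 ^ d := by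
  classical
  -- choose maximizers of `r` on compact subsets
  have hmax' : ∀ S : Set (EuclideanSpace ℝ (Fin d)), ∃ a : EuclideanSpace ℝ (Fin d),
      (S ⊆ K → IsCompact S → S.Nonempty → a ∈ S ∧ ∀ x ∈ S, r x ≤ r a) := by
    intro S
    by_cases h : S ⊆ K ∧ IsCompact S ∧ S.Nonempty
    · obtain ⟨a, ha, hamax⟩ := usc_exists_max h.2.1 h.2.2 (husc.mono h.1)
      exact ⟨a, fun _ _ _ => ⟨ha, hamax⟩⟩
    · exact ⟨hne.choose, fun h1 h2 h3 => absurd ⟨h1, h2, h3⟩ h⟩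
  choose pick hpick using hmax'
  -- the greedy sequence of remaining sets
  obtain ⟨Sq, hS0, hSsucc⟩ : ∃ Sq : ℕ → Set (EuclideanSpace ℝ (Fin d)), Sq 0 = K ∧
      ∀ n, Sq (n+1) = Sq n \ cubeInfty (pick (Sq n)) (r (pick (Sq n))) :=
    ⟨fun n => Nat.rec K (fun _ S => S \ cubeInfty (pick S) (r (pick S))) n, rfl, fun _ => rfl⟩
  have hsub : ∀ n, Sq n ⊆ K := by
    intro n
    induction n with
    | zero => rw [hS0]
    | succ n ih => rw [hSsucc]; exact Set.diff_subset.trans ih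
  have hcomp : ∀ n, IsCompact (Sq n) := by
    intro n
    induction n with
    | zero => rw [hS0]; exact hK
    | succ n ih => rw [hSsucc]; exact ih.diff (cubeInfty_isOpen _ _)
  have hmem : ∀ n, (Sq n).Nonempty → pick (Sq n) ∈ Sq n :=
    fun n hn => (hpick _ (hsub n) (hcomp n) hn).1
  have hmaxr : ∀ n, (Sq n).Nonempty → ∀ x ∈ Sq n, r x ≤ r (pick (Sq n)) :=
    fun n hn => (hpick _ (hsub n) (hcomp n) hn).2
  have hmono : ∀ n m, n ≤ m → Sq m ⊆ Sq n := by
    intro n m h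
    induction m with
    | zero => rw [Nat.le_zero.mp h]
    | succ m ih =>
      rcases Nat.lt_or_ge n (m+1) with h' | h'
      · exact (hSsucc m ▸ Set.diff_subset).trans (ih (Nat.lt_succ_iff.mp h'))
      · rw [le_antisymm h h']
  -- the process terminates
  have hterm : ∃ N, Sq N = ∅ := by
    by_contra hc
    push_neg at hc
    have hnon : ∀ n, (Sq n).Nonempty := hc
    obtain ⟨x, hx⟩ := IsCompact.nonempty_iInter_of_sequence_nonempty_isCompact_isClosed Sq
      (fun n => hSsucc n ▸ Set.diff_subset) hnon (hS0 ▸ hK) (fun n => (hcomp n).isClosed)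
    have hxK : x ∈ K := hS0 ▸ Set.mem_iInter.1 hx 0
    have hεpos : 0 < r x := hrpos x hxK
    have hrge : ∀ n, r x ≤ r (pick (Sq n)) := fun n => hmaxr n (hnon n) x (Set.mem_iInter.1 hx n)
    have hsep : ∀ n m, n < m → r x ≤ dist (pick (Sq n)) (pick (Sq m)) := by
      intro n m hnm
      have h1 : pick (Sq m) ∈ Sq (n+1) := hmono _ _ hnm (hmem m (hnon m))
      rw [hSsucc n] at h1
      have h2 := h1.2
      simp only [cubeInfty, Set.mem_setOf_eq, not_forall, not_lt] at h2
      obtain ⟨c, hc2⟩ := h2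
      calc r x ≤ r (pick (Sq n)) := hrge n
        _ ≤ |pick (Sq m) c - pick (Sq n) c| := hc2
        _ ≤ dist (pick (Sq m)) (pick (Sq n)) := coord_le_dist _ _ c
        _ = dist (pick (Sq n)) (pick (Sq m)) := dist_comm _ _
    obtain ⟨a, -, φ, hφmono, hφlim⟩ := hK.tendsto_subseq
      (x := fun n => pick (Sq n)) (fun n => hsub n (hmem n (hnon n)))
    obtain ⟨k0, hk0⟩ := Metric.tendsto_atTop.1 hφlim (r x / 2) (by positivity)
    have h1 := hk0 k0 le_rfl
    have h2 := hk0 (k0+1) (Nat.le_succ _)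
    have h3 := hsep (φ k0) (φ (k0+1)) (hφmono (Nat.lt_succ_self _))
    have h4 := dist_triangle (pick (Sq (φ k0))) a (pick (Sq (φ (k0+1))))
    have h5 := dist_comm a (pick (Sq (φ (k0+1))))
    simp only [Function.comp_apply] at h1 h2
    linarith
  -- set up the answer
  have hnon : ∀ i : Fin (Nat.find hterm), (Sq i.1).Nonempty :=
    fun i => Set.nonempty_iff_ne_empty.2 (Nat.find_min hterm i.2)
  have hrmono : ∀ i j : Fin (Nat.find hterm), i.1 ≤ j.1 →
      r (pick (Sq j.1)) ≤ r (pick (Sq i.1)) :=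
    fun i j hij => hmaxr i.1 (hnon i) _ (hmono _ _ hij (hmem _ (hnon j)))
  have hout : ∀ i j : Fin (Nat.find hterm), i.1 < j.1 →
      pick (Sq j.1) ∉ cubeInfty (pick (Sq i.1)) (r (pick (Sq i.1))) := by
    intro i j hij
    have h1 : pick (Sq j.1) ∈ Sq (i.1+1) := hmono _ _ hij (hmem _ (hnon j))
    rw [hSsucc] at h1
    exact h1.2
  refine ⟨Nat.find hterm, fun i => pick (Sq i.1), ?_, ?_, ?_, ?_⟩
  · -- points in K
    intro i
    exact hsub _ (hmem _ (hnon i))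
  · -- covering
    have hcov : ∀ n, ∀ x ∈ K, x ∉ Sq n →
        ∃ i, ∃ _ : i < n, x ∈ cubeInfty (pick (Sq i)) (r (pick (Sq i))) := by
      intro n
      induction n with
      | zero => intro x hx hx'; exact absurd (hS0 ▸ hx) hx'
      | succ n ih =>
        intro x hx hx'
        by_cases h : x ∈ Sq n
        · rw [hSsucc] at hx'
          have hq : x ∈ cubeInfty (pick (Sq n)) (r (pick (Sq n))) := by
            by_contra hq
            exact hx' ⟨h, hq⟩
          exact ⟨n, Nat.lt_succ_self n, hq⟩
        · obtain ⟨i, hi, hq⟩ := ih x hx h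
          exact ⟨i, Nat.lt_succ_of_lt hi, hq⟩
    intro x hx
    obtain ⟨i, hi, hq⟩ := hcov (Nat.find hterm) x hx (by rw [Nat.find_spec hterm]; exact notMem_empty x)
    exact Set.mem_iUnion.2 ⟨⟨i, hi⟩, hq⟩
  · -- disjointness of half-cubes
    have hdisj : ∀ i j : Fin (Nat.find hterm), i.1 < j.1 →
          Disjoint (cubeInfty (pick (Sq i.1)) (r (pick (Sq i.1)) / 2))
            (cubeInfty (pick (Sq j.1)) (r (pick (Sq j.1)) / 2)) := by
        intro i j hij
        rw [Set.disjoint_left]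
        intro z hz1 hz2
        have h1 := hout i j hij
        simp only [cubeInfty, Set.mem_setOf_eq, not_forall, not_lt] at h1
        obtain ⟨c, hc⟩ := h1
        have h2 := hz1 c
        have h3 := hz2 c
        have h4 := hrmono i j (le_of_lt hij)
        have htri : |pick (Sq j.1) c - pick (Sq i.1) c|
            ≤ |pick (Sq j.1) c - z c| + |z c - pick (Sq i.1) c| := abs_sub_le _ _ _
        rw [abs_sub_comm (pick (Sq j.1) c) (z c)] at htri
        linarith
    intro i _ j _ hij
    rcases Nat.lt_trichotomy i.1 j.1 with h | h | h
    · exact hdisj i j h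
    · exact absurd (Fin.ext h) hij
    · exact (hdisj j i h).symm
  · -- multiplicity bound
    intro z
    have hinj : Function.Injective
        (fun i : {i : Fin (Nat.find hterm) // z ∈ cubeInfty (pick (Sq i.1)) (r (pick (Sq i.1)))} =>
          (fun c => decide (z c ≤ pick (Sq i.1.1) c) : Fin d → Bool)) := by
      intro a b hab
      have key : ∀ p q : {i : Fin (Nat.find hterm) //
          z ∈ cubeInfty (pick (Sq i.1)) (r (pick (Sq i.1)))}, p.1.1 < q.1.1 →
          (∀ c, decide (z c ≤ pick (Sq p.1.1) c) = decide (z c ≤ pick (Sq q.1.1) c)) → False := by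
        intro p q hpq hsig
        apply hout p.1 q.1 hpq
        intro c
        have h1 := p.2 c
        have h2 := q.2 c
        have h3 := hrmono p.1 q.1 (le_of_lt hpq)
        have hs : (z c ≤ pick (Sq p.1.1) c) ↔ (z c ≤ pick (Sq q.1.1) c) := by
          have := hsig c
          simpa [decide_eq_decide] using this
        rw [abs_lt] at h1 h2 ⊢
        rcases le_or_gt (z c) (pick (Sq p.1.1) c) with hca | hca
        · have hcb := hs.1 hca
          constructor <;> linarith
        · have hcb : pick (Sq q.1.1) c < z c :=
            not_le.1 fun h => not_le.2 hca (hs.2 h)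
          constructor <;> linarith
      by_contra hne
      have hne' : a.1.1 ≠ b.1.1 := fun h => hne (Subtype.ext (Fin.ext h))
      rcases Nat.lt_trichotomy a.1.1 b.1.1 with h | h | h
      · exact key a b h (fun c => congrFun hab c)
      · exact hne' h
      · exact key b a h (fun c => (congrFun hab c).symm)
    calc Nat.card {i : Fin (Nat.find hterm) //
            z ∈ cubeInfty (pick (Sq i.1)) (r (pick (Sq i.1)))}
        ≤ Nat.card (Fin d → Bool) := Nat.card_le_card_of_injective _ hinj
      _ = 2 ^ d := by simp [Nat.card_eq_fintype_card]
end

section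
/- Let Ω ⊂ ℝ^d be a bounded nonempty open set and 0 < γ ≤ ∞. Then there exists a constant c > 0 (depending on Ω, d, γ) such that for every n ∈ ℕ and every finite set P ⊂ ℝ^d with |P| ≤ n, one has ‖dist(·, P)‖_{L_γ(Ω)} ≥ c n^{−1/d}. -/
open Metric Set MeasureTheory
open scoped ENNReal NNReal

/-- Lower bound for the `L_γ(Ω)`-norm (`0 < γ ≤ ∞`) of the distance function of any
`n`-point set: it is at least a constant times `n^{-1/d}`. -/
theorem distFun_eLpNorm_lower_bound {d : ℕ} (hd : 0 < d)
    (Ω : Set (EuclideanSpace ℝ (Fin d))) (hΩb : Bornology.IsBounded Ω)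
    (hΩo : IsOpen Ω) (hne : Ω.Nonempty) (γ : ℝ≥0∞) (hγ : 0 < γ) :
    ∃ c : ℝ, 0 < c ∧ ∀ (n : ℕ) (P : Finset (EuclideanSpace ℝ (Fin d))),
      P.Nonempty → P.card ≤ n →
      ENNReal.ofReal (c * (n : ℝ) ^ (-(1 : ℝ) / d)) ≤
        eLpNorm (fun x => Metric.infDist x (↑P : Set (EuclideanSpace ℝ (Fin d)))) γ
          (volume.restrict Ω) := by
  haveI : Nonempty (Fin d) := Fin.pos_iff_nonempty.mp hd
  haveI : Nontrivial (EuclideanSpace ℝ (Fin d)) := inferInstance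
  have hdR : (0 : ℝ) < d := Nat.cast_pos.mpr hd
  set V : ℝ≥0∞ := volume Ω with hVdef
  have hV0 : 0 < V := hΩo.measure_pos volume hne
  have hVtop : V ≠ ∞ := hΩb.measure_lt_top.ne
  set B : ℝ≥0∞ := volume (ball (0 : EuclideanSpace ℝ (Fin d)) 1) with hBdef
  have hB0 : B ≠ 0 := (measure_ball_pos volume 0 one_pos).ne'
  have hBtop : B ≠ ∞ := measure_ball_lt_top.ne
  -- choose c₀
  have hhalf_ne_top : V / 2 ≠ ∞ := (ENNReal.div_lt_top hVtop (by norm_num)).ne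
  have hhalf_pos : 0 < V / 2 := ENNReal.div_pos hV0.ne' (by norm_num)
  have hq_top : V / 2 / B ≠ ∞ := (ENNReal.div_lt_top hhalf_ne_top hB0).ne
  have hq_pos : 0 < V / 2 / B := ENNReal.div_pos hhalf_pos.ne' hBtop
  set t : ℝ := (V / 2 / B).toReal with htdef
  have ht_pos : 0 < t := ENNReal.toReal_pos hq_pos.ne' hq_top
  set c₀ : ℝ := t ^ ((1 : ℝ) / d) with hc₀def
  have hc₀ : 0 < c₀ := Real.rpow_pos_of_pos ht_pos _
  have hc₀d : c₀ ^ d = t := by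
    rw [hc₀def, ← Real.rpow_natCast (t ^ ((1 : ℝ) / d)) d, ← Real.rpow_mul ht_pos.le,
      one_div_mul_cancel hdR.ne', Real.rpow_one]
  have hkey : ENNReal.ofReal (c₀ ^ d) * B ≤ V / 2 := by
    rw [hc₀d, htdef, ENNReal.ofReal_toReal hq_top, ENNReal.div_mul_cancel hB0 hBtop]
  -- the constant κ
  set κ : ℝ≥0∞ := (V / 2) ^ ((1 : ℝ) / γ.toReal) with hκdef
  have hκ0 : κ ≠ 0 := (ENNReal.rpow_pos hhalf_pos hhalf_ne_top).ne'
  have hκtop : κ ≠ ∞ := by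
    rcases le_or_gt 0 ((1 : ℝ) / γ.toReal) with h | h
    · exact ENNReal.rpow_ne_top_of_nonneg h hhalf_ne_top
    · exact absurd h (not_lt.mpr (by positivity))
  set k : ℝ := min 1 κ.toReal with hkdef
  have hk0 : 0 < k := lt_min one_pos (ENNReal.toReal_pos hκ0 hκtop)
  refine ⟨c₀ * k, mul_pos hc₀ hk0, fun n P hP hcard => ?_⟩
  have hn : 0 < n := lt_of_lt_of_le hP.card_pos hcard
  have hnR : (0 : ℝ) < n := Nat.cast_pos.mpr hn
  set r : ℝ := c₀ * (n : ℝ) ^ (-(1 : ℝ) / d) with hrdef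
  have hr : 0 < r := mul_pos hc₀ (Real.rpow_pos_of_pos hnR _)
  -- r ^ d
  have hrd : (n : ℝ) * r ^ d = c₀ ^ d := by
    rw [hrdef, mul_pow, ← Real.rpow_natCast ((n : ℝ) ^ (-(1 : ℝ) / d)) d,
      ← Real.rpow_mul hnR.le]
    have : (-(1 : ℝ) / d) * d = -1 := by field_simp
    rw [this, Real.rpow_neg_one]
    field_simp
  -- the bad set
  set U : Set (EuclideanSpace ℝ (Fin d)) := ⋃ p ∈ P, ball p r with hUdef
  have hU : MeasurableSet U := P.measurableSet_biUnion fun p _ => measurableSet_ball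
  have hUvol : volume U ≤ V / 2 := by
    calc volume U ≤ ∑ p ∈ P, volume (ball p r) := measure_biUnion_finset_le P _
      _ = P.card * (ENNReal.ofReal (r ^ d) * B) := by
          have hball : ∀ p : EuclideanSpace ℝ (Fin d),
              volume (ball p r) = ENNReal.ofReal (r ^ d) * B := by
            intro p
            rw [hBdef, MeasureTheory.Measure.addHaar_ball volume p hr.le,
              finrank_euclideanSpace_fin]
          simp [hball, Finset.sum_const, nsmul_eq_mul]
      _ ≤ n * (ENNReal.ofReal (r ^ d) * B) := by
          exact mul_le_mul_left (Nat.cast_le.mpr hcard) _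
      _ = ENNReal.ofReal ((n : ℝ) * r ^ d) * B := by
          rw [ENNReal.ofReal_mul hnR.le, ← mul_assoc, ENNReal.ofReal_natCast]
      _ = ENNReal.ofReal (c₀ ^ d) * B := by rw [hrd]
      _ ≤ V / 2 := hkey
  set S : Set (EuclideanSpace ℝ (Fin d)) := Ω \ U with hSdef
  have hS : MeasurableSet S := hΩo.measurableSet.diff hU
  have hSvol : V / 2 ≤ volume S := by
    have hsub : Ω ⊆ S ∪ U := fun x hx => by
      by_cases h : x ∈ U
      · exact Or.inr h
      · exact Or.inl ⟨hx, h⟩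
    have : V ≤ volume S + V / 2 :=
      le_trans (measure_mono hsub) (le_trans (measure_union_le _ _) (by gcongr))
    calc V / 2 = V - V / 2 := (ENNReal.sub_half hVtop).symm
      _ ≤ volume S := tsub_le_iff_right.mpr this
  -- restricted measure of S
  have hSres : (volume.restrict Ω) S = volume S := by
    rw [Measure.restrict_apply hS, inter_eq_left.mpr diff_subset]
  have hSres0 : (volume.restrict Ω) S ≠ 0 := by
    rw [hSres]; exact (lt_of_lt_of_le hhalf_pos hSvol).ne'
  -- distance lower bound on S
  have hdist : ∀ x ∈ S, r ≤ Metric.infDist x (↑P : Set (EuclideanSpace ℝ (Fin d))) := by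
    intro x hx
    by_contra h
    push_neg at h
    obtain ⟨p, hpP, hpd⟩ := (Metric.infDist_lt_iff (by exact_mod_cast hP)).mp h
    exact hx.2 (Set.mem_biUnion hpP (mem_ball'.mpr (by rwa [dist_comm])))
  -- comparison with indicator
  have hmono : ∀ x, ‖S.indicator (fun _ => r) x‖ ≤
      ‖Metric.infDist x (↑P : Set (EuclideanSpace ℝ (Fin d)))‖ := by
    intro x
    by_cases hx : x ∈ S
    · rw [Set.indicator_of_mem hx, Real.norm_of_nonneg hr.le,
        Real.norm_of_nonneg Metric.infDist_nonneg]
      exact hdist x hx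
    · rw [Set.indicator_of_notMem hx, norm_zero]
      exact norm_nonneg _
  have hle := eLpNorm_mono hmono (p := γ) (μ := volume.restrict Ω)
  rw [eLpNorm_indicator_const' hS hSres0 hγ.ne'] at hle
  refine le_trans ?_ hle
  have hnorm : ‖r‖ₑ = ENNReal.ofReal r := by
    rw [Real.enorm_eq_ofReal hr.le]
  rw [hnorm]
  have hκle : κ ≤ (volume.restrict Ω) S ^ ((1 : ℝ) / γ.toReal) := by
    rw [hSres]
    exact ENNReal.rpow_le_rpow hSvol (by positivity)
  calc ENNReal.ofReal (c₀ * k * (n : ℝ) ^ (-(1 : ℝ) / d))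
      = ENNReal.ofReal r * ENNReal.ofReal k := by
        rw [← ENNReal.ofReal_mul hr.le, hrdef]; ring_nf
    _ ≤ ENNReal.ofReal r * κ := by
        gcongr
        calc ENNReal.ofReal k ≤ ENNReal.ofReal κ.toReal :=
              ENNReal.ofReal_le_ofReal (min_le_right _ _)
          _ = κ := ENNReal.ofReal_toReal hκtop
    _ ≤ ENNReal.ofReal r * (volume.restrict Ω) S ^ ((1 : ℝ) / γ.toReal) := by gcongr
end

section
/- Let Ω ⊂ ℝ^d be a bounded convex open set containing a ball of radius r > 0, let x ∈ closure(Ω) and 0 < ρ ≤ r. Then the closure of Ω ∩ B^∞(x, ρ) satisfies an interior cone condition with height c_θ ρ and angle θ' = 2 arcsin(c_θ / (4√d)), where θ = 2 arcsin(r / (2 diam Ω)) and c_θ = sin θ / (1 + sin θ). -/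
open Metric Set

lemma euclid_coord_abs_le_norm {d : ℕ} (v : EuclideanSpace ℝ (Fin d)) (i : Fin d) :
    |v i| ≤ ‖v‖ := by
  rw [EuclideanSpace.norm_eq]
  calc |v i| = Real.sqrt (‖v i‖ ^ 2) := by
        rw [Real.sqrt_sq (norm_nonneg _), Real.norm_eq_abs]
    _ ≤ _ := Real.sqrt_le_sqrt (Finset.single_le_sum (f := fun j => ‖v j‖ ^ 2)
        (fun j _ => sq_nonneg _) (Finset.mem_univ i))

lemma euclid_norm_le_of_coord {d : ℕ} (v : EuclideanSpace ℝ (Fin d)) {M : ℝ} (hM : 0 ≤ M)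
    (h : ∀ i, |v i| ≤ M) : ‖v‖ ≤ Real.sqrt d * M := by
  rw [EuclideanSpace.norm_eq]
  have h1 : ∑ i, ‖v i‖ ^ 2 ≤ (d : ℝ) * M ^ 2 := by
    calc ∑ i, ‖v i‖ ^ 2 ≤ ∑ _i : Fin d, M ^ 2 :=
          Finset.sum_le_sum fun i _ => by
            rw [Real.norm_eq_abs]
            exact pow_le_pow_left₀ (abs_nonneg _) (h i) 2
      _ = (d : ℝ) * M ^ 2 := by simp [Finset.sum_const, Finset.card_univ, mul_comm]
  calc Real.sqrt (∑ i, ‖v i‖ ^ 2) ≤ Real.sqrt ((d : ℝ) * M ^ 2) := Real.sqrt_le_sqrt h1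
    _ = Real.sqrt d * M := by
        rw [Real.sqrt_mul (Nat.cast_nonneg d), Real.sqrt_sq hM]

lemma euclid_coord_continuous {d : ℕ} (i : Fin d) :
    Continuous fun v : EuclideanSpace ℝ (Fin d) => v i :=
  (continuous_apply i).comp (PiLp.continuous_ofLp 2 fun _ : Fin d => ℝ)

lemma cubeInfty_convex {d : ℕ} (x : EuclideanSpace ℝ (Fin d)) (ρ : ℝ) :
    Convex ℝ (cubeInfty x ρ) := by
  intro v hv v' hv' a b ha hb hab
  intro i
  have hkey : (a • v + b • v') i - x i = a * (v i - x i) + b * (v' i - x i) := by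
    have : (a • v + b • v') i = a * v i + b * v' i := rfl
    rw [this]
    linear_combination (x i) * hab
  rw [hkey]
  have h1 := hv i
  have h2 := hv' i
  have habs : |a * (v i - x i) + b * (v' i - x i)| ≤ a * |v i - x i| + b * |v' i - x i| := by
    refine (abs_add_le _ _).trans ?_
    rw [abs_mul, abs_mul, abs_of_nonneg ha, abs_of_nonneg hb]
  rcases ha.eq_or_lt with ha0 | ha0
  · have hb1 : b = 1 := by linarith
    rw [← ha0, hb1] at habs ⊢
    simpa using lt_of_le_of_lt habs (by simpa using h2)
  · have e1 : a * |v i - x i| < a * ρ := by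
      exact mul_lt_mul_of_pos_left h1 ha0
    have e2 : b * |v' i - x i| ≤ b * ρ := mul_le_mul_of_nonneg_left h2.le hb
    calc |a * (v i - x i) + b * (v' i - x i)| ≤ a * |v i - x i| + b * |v' i - x i| := habs
      _ < a * ρ + b * ρ := by linarith
      _ = ρ := by linear_combination ρ * hab

set_option maxHeartbeats 1200000 in
/-- Local interior cone condition for a bounded convex domain: the closure of the
intersection of `Ω` with any cube `B^∞(x, ρ)` (with `x ∈ closure Ω`, `0 < ρ ≤ r`)
satisfies an interior cone condition with height `c_θ ρ` and angle
`θ' = 2 arcsin(c_θ / (4√d))`, where `θ = 2 arcsin(r / (2 diam Ω))` and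
`c_θ = sin θ / (1 + sin θ)`. -/
theorem local_coneCondition_of_convex {d : ℕ} (hd : 0 < d)
    (Ω : Set (EuclideanSpace ℝ (Fin d))) (hΩb : Bornology.IsBounded Ω)
    (hΩc : Convex ℝ Ω) (hΩo : IsOpen Ω)
    (z : EuclideanSpace ℝ (Fin d)) (r : ℝ) (hr : 0 < r) (hball : ball z r ⊆ Ω)
    (x : EuclideanSpace ℝ (Fin d)) (hx : x ∈ closure Ω) (ρ : ℝ) (hρ : 0 < ρ)
    (hρr : ρ ≤ r) :
    ∀ w ∈ closure (Ω ∩ cubeInfty x ρ),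
      ∃ ξ : EuclideanSpace ℝ (Fin d), ‖ξ‖ = 1 ∧
        cone w ξ
          (Real.sin (2 * Real.arcsin (r / (2 * Metric.diam Ω))) /
            (1 + Real.sin (2 * Real.arcsin (r / (2 * Metric.diam Ω)))) * ρ)
          (2 * Real.arcsin
            (Real.sin (2 * Real.arcsin (r / (2 * Metric.diam Ω))) /
              (1 + Real.sin (2 * Real.arcsin (r / (2 * Metric.diam Ω)))) /
              (4 * Real.sqrt d)))
          ⊆ closure (Ω ∩ cubeInfty x ρ) := by
  intro w hw
  have hd1 : (1 : ℝ) ≤ Real.sqrt d := Real.one_le_sqrt.mpr (by exact_mod_cast hd)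
  have hzΩ : z ∈ Ω := hball (mem_ball_self hr)
  set D := Metric.diam Ω with hD
  have hD0' : 0 ≤ D := Metric.diam_nonneg
  -- `2 r ≤ D`
  have hD2r : 2 * r ≤ D := by
    by_contra hcon
    push_neg at hcon
    set e : EuclideanSpace ℝ (Fin d) := EuclideanSpace.single ⟨0, hd⟩ (1 : ℝ) with he
    have hne : ‖e‖ = 1 := by simp [he]
    set a := (D / 2 + r) / 2 with ha
    have ha0 : 0 ≤ a := by positivity
    have har : a < r := by rw [ha]; linarith
    have h1 : z + a • e ∈ Ω := by
      apply hball
      rw [mem_ball, dist_eq_norm]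
      have : z + a • e - z = a • e := by abel
      rw [this, norm_smul, hne, Real.norm_eq_abs, abs_of_nonneg ha0]
      simpa using har
    have h2 : z - a • e ∈ Ω := by
      apply hball
      rw [mem_ball, dist_eq_norm]
      have : z - a • e - z = (-a) • e := by
        rw [neg_smul]; abel
      rw [this, norm_smul, hne, Real.norm_eq_abs, abs_neg, abs_of_nonneg ha0]
      simpa using har
    have hdist : dist (z + a • e) (z - a • e) ≤ D :=
      Metric.dist_le_diam_of_mem hΩb h1 h2
    rw [dist_eq_norm] at hdist
    have : z + a • e - (z - a • e) = (2 * a) • e := by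
      rw [two_mul, add_smul]; abel
    rw [this, norm_smul, hne, Real.norm_eq_abs, abs_of_nonneg (by linarith)] at hdist
    simp only [mul_one] at hdist
    rw [ha] at hdist
    linarith
  have hD0 : 0 < D := by linarith
  set s := r / (2 * D) with hs
  have hs0 : 0 < s := div_pos hr (by linarith)
  have hs14 : s ≤ 1 / 4 := by
    rw [hs, div_le_div_iff₀ (by linarith) (by norm_num)]
    linarith
  set σ := Real.sin (2 * Real.arcsin s) with hσdef
  have hσeq : σ = 2 * s * Real.sqrt (1 - s ^ 2) := by
    rw [hσdef, Real.sin_two_mul, Real.sin_arcsin (by linarith) (by linarith),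
      Real.cos_arcsin]
  have h1s : 0 < 1 - s ^ 2 := by nlinarith
  have hσ0 : 0 < σ := by
    rw [hσeq]
    have := Real.sqrt_pos.mpr h1s
    nlinarith
  have hσle : σ ≤ 2 * s := by
    rw [hσeq]
    have h1 : Real.sqrt (1 - s ^ 2) ≤ 1 := Real.sqrt_le_one.mpr (by nlinarith)
    nlinarith
  set c := σ / (1 + σ) with hcdef
  have hc0 : 0 < c := div_pos hσ0 (by linarith)
  have hc1 : c < 1 := by
    rw [hcdef, div_lt_one (by linarith)]; linarith
  set u := c / (4 * Real.sqrt d) with hudef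
  have h4d : (0 : ℝ) < 4 * Real.sqrt d := by linarith
  have hu0 : 0 < u := div_pos hc0 h4d
  have hu14 : u ≤ 1 / 4 := by
    rw [hudef, div_le_iff₀ h4d]
    nlinarith
  -- the interior ball
  set t := ρ / (r + D) with htdef
  have hrD : 0 < r + D := by linarith
  have ht0 : 0 < t := div_pos hρ hrD
  have ht1 : t < 1 := by
    rw [htdef, div_lt_one hrD]; linarith
  set η := t * r with hηdef
  have hη0 : 0 < η := mul_pos ht0 hr
  set p : EuclideanSpace ℝ (Fin d) := x + t • (z - x) with hpdef
  have hpx : ‖p - x‖ ≤ t * D := by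
    have h1 : p - x = t • (z - x) := by rw [hpdef]; abel
    rw [h1, norm_smul, Real.norm_eq_abs, abs_of_pos ht0]
    have h2 : ‖z - x‖ ≤ D := by
      have hzc : z ∈ closure Ω := subset_closure hzΩ
      have h3 := Metric.dist_le_diam_of_mem hΩb.closure hzc hx
      rwa [Metric.diam_closure, dist_eq_norm] at h3
    nlinarith
  have hteq : η + t * D = ρ := by
    rw [hηdef, htdef]; field_simp
  have hpxi : ∀ i, |p i - x i| ≤ t * D := by
    intro i
    have h1 : |(p - x) i| ≤ ‖p - x‖ := euclid_coord_abs_le_norm (p - x) i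
    have h2 : (p - x) i = p i - x i := rfl
    rw [h2] at h1
    exact h1.trans hpx
  have hballp : ball p η ⊆ Ω ∩ cubeInfty x ρ := by
    intro v hv
    rw [mem_ball, dist_eq_norm] at hv
    constructor
    · have hb : z + t⁻¹ • (v - p) ∈ Ω := by
        apply hball
        rw [mem_ball, dist_eq_norm]
        have h1 : z + t⁻¹ • (v - p) - z = t⁻¹ • (v - p) := by abel
        rw [h1, norm_smul, Real.norm_eq_abs, abs_of_pos (inv_pos.mpr ht0)]
        calc t⁻¹ * ‖v - p‖ < t⁻¹ * η := by
              exact mul_lt_mul_of_pos_left hv (inv_pos.mpr ht0)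
          _ = r := by rw [hηdef]; field_simp
      have key : v = t • (z + t⁻¹ • (v - p)) + (1 - t) • x := by
        rw [hpdef, smul_add, smul_smul, mul_inv_cancel₀ (ne_of_gt ht0), one_smul]
        module
      rw [key]
      have hmem := hΩc.combo_interior_closure_mem_interior
        (a := t) (b := 1 - t)
        (by rwa [hΩo.interior_eq] : z + t⁻¹ • (v - p) ∈ interior Ω) hx ht0
        (by linarith) (by ring)
      rwa [hΩo.interior_eq] at hmem
    · intro i
      have h1 : |(v - p) i| ≤ ‖v - p‖ := euclid_coord_abs_le_norm (v - p) i
      have h2 : (v - p) i = v i - p i := rfl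
      rw [h2] at h1
      have h3 := hpxi i
      have h4 : |v i - x i| ≤ |v i - p i| + |p i - x i| := abs_sub_le _ _ _
      linarith
  have hcball : closedBall p η ⊆ closure (Ω ∩ cubeInfty x ρ) := by
    rw [← closure_ball p (ne_of_gt hη0)]
    exact closure_mono hballp
  have hconv : Convex ℝ (closure (Ω ∩ cubeInfty x ρ)) :=
    (hΩc.inter (cubeInfty_convex x ρ)).closure
  have hwcube : ∀ i, |w i - x i| ≤ ρ := by
    intro i
    have hcl : closure (Ω ∩ cubeInfty x ρ) ⊆ {v : EuclideanSpace ℝ (Fin d) | |v i - x i| ≤ ρ} := by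
      apply closure_minimal
      · intro v hv
        exact le_of_lt (hv.2 i)
      · exact isClosed_le (((euclid_coord_continuous i).sub continuous_const).abs)
          continuous_const
    exact hcl hw
  set L := ‖p - w‖ with hLdef
  have hL0' : 0 ≤ L := norm_nonneg _
  have htDρ : t * D ≤ ρ := by nlinarith [hη0]
  have hLle : L ≤ Real.sqrt d * (2 * ρ) := by
    refine euclid_norm_le_of_coord (p - w) (M := 2 * ρ) (by linarith) ?_
    intro i
    have h1 : (p - w) i = p i - w i := rfl
    rw [h1]
    have h2 := hpxi i
    have h3 : |x i - w i| ≤ ρ := by rw [abs_sub_comm]; exact hwcube i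
    have h4 : |p i - w i| ≤ |p i - x i| + |x i - w i| := abs_sub_le _ _ _
    linarith
  have hcρη : c * ρ ≤ η := by
    have h2s : σ * D ≤ r := by
      have : 2 * s * D = r := by rw [hs]; field_simp
      nlinarith
    have hcle : c ≤ r / (r + D) := by
      rw [hcdef, div_le_div_iff₀ (by linarith) hrD]
      nlinarith
    calc c * ρ ≤ r / (r + D) * ρ := by nlinarith
      _ = η := by rw [hηdef, htdef]; field_simp
  -- pick direction
  obtain ⟨ξ, hξ1, hξw⟩ : ∃ ξ : EuclideanSpace ℝ (Fin d), ‖ξ‖ = 1 ∧ p - w = L • ξ := by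
    by_cases hpw : p = w
    · refine ⟨EuclideanSpace.single ⟨0, hd⟩ (1 : ℝ), by simp, ?_⟩
      have : L = 0 := by rw [hLdef, hpw]; simp
      rw [this, hpw]; simp
    · have hL0 : 0 < L := by
        rw [hLdef]
        exact norm_pos_iff.mpr (sub_ne_zero.mpr hpw)
      refine ⟨L⁻¹ • (p - w), ?_, ?_⟩
      · rw [norm_smul, Real.norm_eq_abs, abs_of_pos (inv_pos.mpr hL0), ← hLdef]
        field_simp
      · rw [smul_smul, mul_inv_cancel₀ (ne_of_gt hL0), one_smul]
  have hppw : p = w + L • ξ := by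
    rw [← hξw]; abel
  refine ⟨ξ, hξ1, ?_⟩
  intro q hq
  obtain ⟨y, lam, hy, hyξ, ⟨hlam0, hlamh⟩, rfl⟩ := hq
  -- cos θ' = 1 - 2 u ^ 2
  have hcos : Real.cos (2 * Real.arcsin u) = 1 - 2 * u ^ 2 := by
    rw [Real.cos_two_mul, Real.cos_arcsin, Real.sq_sqrt (by nlinarith)]
    ring
  rw [hcos] at hyξ
  have hlamEta : lam ≤ η := le_trans hlamh hcρη
  have hyξnorm : ‖y - ξ‖ ≤ 2 * u := by
    have h2 : ‖y - ξ‖ ^ 2 = 2 - 2 * (inner ℝ y ξ : ℝ) := by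
      rw [norm_sub_sq_real, hy, hξ1]; ring
    have h3 : ‖y - ξ‖ ^ 2 ≤ (2 * u) ^ 2 := by
      rw [h2]; nlinarith only [hyξ]
    have h4 := Real.sqrt_le_sqrt h3
    rwa [Real.sqrt_sq (norm_nonneg _), Real.sqrt_sq (by positivity)] at h4
  rcases le_total lam L with hlamL | hlamL
  · rcases hlam0.eq_or_lt with heq | hlam0'
    · rw [← heq]
      simpa using hw
    · -- 0 < lam ≤ L : convex combination with a point of the ball
      have hL0 : 0 < L := lt_of_lt_of_le hlam0' hlamL
      set μ := lam / L with hμdef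
      have hμ0 : 0 < μ := div_pos hlam0' hL0
      have hμ1 : μ ≤ 1 := by
        rw [hμdef, div_le_one hL0]; exact hlamL
      have hμL : μ * L = lam := by
        rw [hμdef]; field_simp
      set v : EuclideanSpace ℝ (Fin d) := p + L • (y - ξ) with hvdef
      have hvball : v ∈ closedBall p η := by
        rw [mem_closedBall, dist_eq_norm]
        have h1 : v - p = L • (y - ξ) := by rw [hvdef]; abel
        rw [h1, norm_smul, Real.norm_eq_abs, abs_of_pos hL0]
        calc L * ‖y - ξ‖ ≤ Real.sqrt d * (2 * ρ) * (2 * u) := by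
              apply mul_le_mul hLle hyξnorm (norm_nonneg _) (by positivity)
          _ = c * ρ := by
              rw [hudef]
              have hsd : Real.sqrt d ≠ 0 := by positivity
              field_simp
              ring
          _ ≤ η := hcρη
      have hcombo : (1 - μ) • w + μ • v = w + lam • y := by
        rw [hvdef, hppw, ← hμL]
        module
      rw [← hcombo]
      exact hconv hw (hcball hvball) (by linarith) hμ0.le (by ring)
  · -- L ≤ lam : the point lies already in the closed ball
    apply hcball
    rw [mem_closedBall, dist_eq_norm]
    have hsub : w + lam • y - p = lam • y - L • ξ := by
      rw [hppw]; abel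
    rw [hsub]
    have hip : (inner ℝ y ξ : ℝ) ≥ 1 - 2 * u ^ 2 := hyξ
    have hn2 : ‖lam • y - L • ξ‖ ^ 2 =
        lam ^ 2 - 2 * (lam * L) * (inner ℝ y ξ : ℝ) + L ^ 2 := by
      rw [norm_sub_sq_real, norm_smul, norm_smul, real_inner_smul_left,
        real_inner_smul_right, hy, hξ1, Real.norm_eq_abs, Real.norm_eq_abs,
        abs_of_nonneg hlam0, abs_of_nonneg hL0']
      ring
    have h4u : 4 * u ^ 2 ≤ 1 := by nlinarith only [hu0.le, hu14]
    have hA : 2 * (lam * L) * (1 - 2 * u ^ 2) ≤ 2 * (lam * L) * (inner ℝ y ξ : ℝ) :=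
      mul_le_mul_of_nonneg_left hyξ (by positivity)
    have hB : lam * L * (4 * u ^ 2) ≤ lam * L * 1 :=
      mul_le_mul_of_nonneg_left h4u (mul_nonneg hlam0 hL0')
    have hC : 0 ≤ L * (lam - L) := mul_nonneg hL0' (sub_nonneg.mpr hlamL)
    have hD : lam ^ 2 ≤ η ^ 2 := by nlinarith only [hlam0, hlamEta]
    have hbound : ‖lam • y - L • ξ‖ ^ 2 ≤ η ^ 2 := by
      rw [hn2]
      linarith only [hA, hB, hC, hD]
    have h5 := Real.sqrt_le_sqrt hbound
    rwa [Real.sqrt_sq (norm_nonneg _), Real.sqrt_sq hη0.le] at h5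
end

section
/- Let K ⊂ ℝ^d be compact and P ⊂ K a finite nonempty set with covering radius h = sup_{x∈K} dist(x, P). Then there exists a subset X ⊆ P such that sup_{x∈K} dist(x, X) ≤ 2h and the separation distance satisfies (1/2) min_{x ≠ y ∈ X} ‖x − y‖₂ ≥ h/2. -/
open Metric Set

/-- From any finite set `P` in a compact set `K` with covering radius `h` one can extract a
subset `X` with covering radius at most `2h` and separation distance at least `h/2`. -/
theorem exists_separated_subcover {d : ℕ} (hd : 0 < d)
    (K : Set (EuclideanSpace ℝ (Fin d))) (hK : IsCompact K) (hKne : K.Nonempty)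
    (P : Finset (EuclideanSpace ℝ (Fin d))) (hPne : P.Nonempty)
    (hPK : (↑P : Set (EuclideanSpace ℝ (Fin d))) ⊆ K)
    (h : ℝ) (hh : h = ⨆ x ∈ K, Metric.infDist x (↑P : Set (EuclideanSpace ℝ (Fin d)))) :
    ∃ X : Finset (EuclideanSpace ℝ (Fin d)), X ⊆ P ∧ X.Nonempty ∧
      (∀ x ∈ K, Metric.infDist x (↑X : Set (EuclideanSpace ℝ (Fin d))) ≤ 2 * h) ∧
      (∀ x ∈ X, ∀ y ∈ X, x ≠ y → h / 2 ≤ (1 / 2) * ‖x - y‖) := by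
  classical
  obtain ⟨p0, hp0⟩ := hPne
  -- bound on the covering radius function
  obtain ⟨R, hR⟩ := hK.isBounded.subset_closedBall p0
  have hbdd : BddAbove (Set.range fun x => ⨆ _ : x ∈ K,
      Metric.infDist x (↑P : Set (EuclideanSpace ℝ (Fin d)))) := by
    refine ⟨max R 0, ?_⟩
    rintro _ ⟨x, rfl⟩
    refine Real.iSup_le (fun hx => ?_) (le_max_right _ _)
    calc Metric.infDist x (↑P : Set (EuclideanSpace ℝ (Fin d))) ≤ dist x p0 :=
          Metric.infDist_le_dist_of_mem (by exact_mod_cast hp0)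
      _ ≤ R := hR hx
      _ ≤ max R 0 := le_max_left _ _
  -- anyone in K has infDist to P at most h
  have hle : ∀ x ∈ K, Metric.infDist x (↑P : Set (EuclideanSpace ℝ (Fin d))) ≤ h := by
    intro x hx
    rw [hh]
    have h1 : (⨆ _ : x ∈ K, Metric.infDist x (↑P : Set (EuclideanSpace ℝ (Fin d))))
        = Metric.infDist x (↑P : Set (EuclideanSpace ℝ (Fin d))) := ciSup_pos hx
    rw [← h1]
    exact le_ciSup hbdd x
  have hh0 : 0 ≤ h := by
    obtain ⟨x0, hx0⟩ := hKne
    exact le_trans Metric.infDist_nonneg (hle x0 hx0)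
  -- the family of h-separated nonempty subsets of P
  set S : Finset (Finset (EuclideanSpace ℝ (Fin d))) :=
    P.powerset.filter (fun X => X.Nonempty ∧
      ∀ x ∈ X, ∀ y ∈ X, x ≠ y → h ≤ dist x y) with hS
  have hSne : S.Nonempty := by
    refine ⟨{p0}, ?_⟩
    simp only [hS, Finset.mem_filter, Finset.mem_powerset]
    refine ⟨by simpa using hp0, Finset.singleton_nonempty _, ?_⟩
    intro x hx y hy hxy
    simp only [Finset.mem_singleton] at hx hy
    exact absurd (hx.trans hy.symm) hxy
  obtain ⟨X, hXS, hXmax⟩ := S.exists_maximal hSne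
  simp only [hS, Finset.mem_filter, Finset.mem_powerset] at hXS
  obtain ⟨hXP, hXne, hXsep⟩ := hXS
  -- every point of P is within h of X
  have hPX : ∀ p ∈ P, Metric.infDist p (↑X : Set (EuclideanSpace ℝ (Fin d))) ≤ h := by
    intro p hp
    by_cases hpX : p ∈ X
    · rw [Metric.infDist_zero_of_mem (by exact_mod_cast hpX)]; exact hh0
    · by_contra hcon
      push_neg at hcon
      have hfar : ∀ x ∈ X, h ≤ dist p x := by
        intro x hx
        by_contra hlt
        push_neg at hlt
        exact absurd (le_of_lt (lt_of_le_of_lt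
          (Metric.infDist_le_dist_of_mem (by exact_mod_cast hx)) hlt)) (not_le.mpr hcon)
      have hins : insert p X ∈ S := by
        simp only [hS, Finset.mem_filter, Finset.mem_powerset]
        refine ⟨Finset.insert_subset hp hXP, Finset.insert_nonempty _ _, ?_⟩
        intro x hx y hy hxy
        rcases Finset.mem_insert.mp hx with he | hx
        · rcases Finset.mem_insert.mp hy with he' | hy
          · exact absurd (he.trans he'.symm) hxy
          · rw [he]; exact hfar y hy
        · rcases Finset.mem_insert.mp hy with he' | hy
          · rw [he', dist_comm]; exact hfar x hx
          · exact hXsep x hx y hy hxy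
      exact hpX (hXmax hins (Finset.subset_insert p X) (Finset.mem_insert_self p X))
  refine ⟨X, hXP, hXne, ?_, ?_⟩
  · intro x hx
    have hPcl : IsCompact (↑P : Set (EuclideanSpace ℝ (Fin d))) := P.finite_toSet.isCompact
    obtain ⟨p, hp, hpd⟩ := hPcl.exists_infDist_eq_dist
      (Finset.coe_nonempty.mpr ⟨p0, hp0⟩) x
    have hp' : p ∈ P := by exact_mod_cast hp
    calc Metric.infDist x (↑X : Set (EuclideanSpace ℝ (Fin d)))
        ≤ Metric.infDist p (↑X : Set (EuclideanSpace ℝ (Fin d))) + dist x p :=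
          Metric.infDist_le_infDist_add_dist
      _ ≤ h + h := by
          have := hle x hx
          rw [hpd] at this
          exact add_le_add (hPX p hp') this
      _ = 2 * h := by ring
  · intro x hx y hy hxy
    have := hXsep x hx y hy hxy
    rw [dist_eq_norm] at this
    linarith
end

section
/- Let Ω ⊂ ℝ^d be a bounded open set satisfying an interior cone condition. Then there exists a constant c_Ω > 0 such that for every x ∈ Ω and every ρ with 0 < ρ ≤ 1 + sup_{y ∈ Ω} ‖y‖₂, one has vol(B(x, ρ) ∩ Ω) ≥ c_Ω · vol(B(x, ρ)). -/
set_option maxHeartbeats 1000000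


open Metric Set MeasureTheory

/-- A bounded open set satisfying an interior cone condition has the property that the
volume of `B(x, ρ) ∩ Ω` is at least a fixed proportion of the volume of `B(x, ρ)`, for all
`x ∈ Ω` and `0 < ρ ≤ 1 + sup_{y ∈ Ω} ‖y‖`. -/
theorem volume_ball_inter_ge_of_coneCondition {d : ℕ} (hd : 0 < d)
    (Ω : Set (EuclideanSpace ℝ (Fin d))) (hΩb : Bornology.IsBounded Ω) (hΩo : IsOpen Ω)
    (r θ : ℝ) (hr : 0 < r) (hθ : θ ∈ Set.Ioo 0 (Real.pi / 2))
    (hcone : ∀ x ∈ Ω, ∃ ξ : EuclideanSpace ℝ (Fin d), ‖ξ‖ = 1 ∧ cone x ξ r θ ⊆ Ω) :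
    ∃ cΩ : ℝ, 0 < cΩ ∧ ∀ x ∈ Ω, ∀ ρ : ℝ, 0 < ρ → ρ ≤ 1 + (⨆ y ∈ Ω, ‖y‖) →
      ENNReal.ofReal cΩ * volume (ball x ρ) ≤ volume (ball x ρ ∩ Ω) := by
  haveI : Nontrivial (EuclideanSpace ℝ (Fin d)) :=
    Module.nontrivial_of_finrank_pos (R := ℝ) (by rw [finrank_euclideanSpace_fin]; exact hd)
  obtain ⟨hθ0, hθπ⟩ := hθ
  have hpi : 0 < Real.pi := Real.pi_pos
  have hcos : 0 < Real.cos θ := Real.cos_pos_of_mem_Ioo ⟨by linarith, hθπ⟩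
  have hsin : 0 < Real.sin θ := Real.sin_pos_of_pos_of_lt_pi hθ0 (by linarith)
  have hsin1 : Real.sin θ ≤ 1 := Real.sin_le_one θ
  set σ := Real.sin θ with hσ
  set S := ⨆ y ∈ Ω, ‖y‖ with hSdef
  set R := 1 + S with hRdef
  have hS0 : 0 ≤ S := Real.iSup_nonneg fun y => Real.iSup_nonneg fun _ => norm_nonneg y
  have hR0 : 0 < R := by simp only [hRdef]; linarith
  have hden : (0:ℝ) < 1 + σ := by linarith
  refine ⟨(σ * min (r / R) 1 / (1 + σ)) ^ d, pow_pos (div_pos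
    (mul_pos hsin (lt_min (div_pos hr hR0) one_pos)) hden) d, ?_⟩
  intro x hx ρ hρ hρR
  obtain ⟨ξ, hξ, hsub⟩ := hcone x hx
  set t := min r ρ / (1 + σ) with htdef
  have ht : 0 < t := div_pos (lt_min hr hρ) hden
  have htsum : t * (1 + σ) = min r ρ := by rw [htdef]; exact div_mul_cancel₀ _ hden.ne'
  set c := x + t • ξ with hcdef
  -- the inscribed ball is inside the cone
  have hballcone : ball c (t * σ) ⊆ cone x ξ r θ := by
    intro z hz
    rw [mem_ball, dist_eq_norm] at hz
    set w := z - c with hwdef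
    set v := z - x with hvdef
    have hvw : v = t • ξ + w := by rw [hvdef, hwdef, hcdef]; abel
    have hW : ‖w‖ < t * σ := hz
    set s : ℝ := (inner ℝ w ξ : ℝ) with hsdef
    have hs : |s| ≤ ‖w‖ := by
      simpa [hξ, hsdef] using abs_real_inner_le_norm w ξ
    obtain ⟨hs1, hs2⟩ := abs_le.mp hs
    have hivξ : (inner ℝ v ξ : ℝ) = t + s := by
      rw [hvw, inner_add_left, real_inner_smul_left, real_inner_self_eq_norm_sq, hξ, hsdef]
      ring
    have hnv : ‖v‖ ^ 2 = t ^ 2 + 2 * (t * s) + ‖w‖ ^ 2 := by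
      rw [hvw, norm_add_sq_real, real_inner_smul_left, norm_smul, hξ,
        Real.norm_eq_abs, abs_of_pos ht, real_inner_comm, hsdef]
      ring
    have hvr : ‖v‖ ≤ min r ρ := by
      have h1 : ‖v‖ ≤ ‖t • ξ‖ + ‖w‖ := by rw [hvw]; exact norm_add_le _ _
      have h2 : ‖t • ξ‖ = t := by
        rw [norm_smul, hξ, Real.norm_eq_abs, abs_of_pos ht]; ring
      nlinarith
    have hpy : σ ^ 2 + Real.cos θ ^ 2 = 1 := Real.sin_sq_add_cos_sq θ
    have hW2 : ‖w‖ ^ 2 ≤ (t * σ) ^ 2 :=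
      pow_le_pow_left₀ (norm_nonneg w) hW.le 2
    have key : Real.cos θ * ‖v‖ ≤ (inner ℝ v ξ : ℝ) := by
      have htσ : t * σ ≤ t := by nlinarith
      have h2 : 0 ≤ t + s := by linarith [hW.le]
      have h1 : Real.cos θ ^ 2 * (t ^ 2 + 2 * (t * s) + ‖w‖ ^ 2) ≤ (t + s) ^ 2 := by
        nlinarith [sq_nonneg (t * σ ^ 2 + s),
          mul_nonneg (sq_nonneg (Real.cos θ)) (sub_nonneg.mpr hW2)]
      have h1' : (Real.cos θ * ‖v‖) ^ 2 ≤ (t + s) ^ 2 := by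
        rw [mul_pow, hnv]; exact h1
      rw [hivξ]
      nlinarith [mul_nonneg hcos.le (norm_nonneg v), h1', h2]
    by_cases hv : v = 0
    · refine ⟨ξ, 0, hξ, ?_, ⟨le_rfl, hr.le⟩, ?_⟩
      · rw [real_inner_self_eq_norm_sq, hξ]
        simpa using Real.cos_le_one θ
      · have : z = x := by
          have := hvdef ▸ hv
          rw [sub_eq_zero] at this
          exact this
        simp [this]
    · refine ⟨(‖v‖ : ℝ)⁻¹ • v, ‖v‖, by simpa using norm_smul_inv_norm (𝕜 := ℝ) hv,
        ?_, ⟨norm_nonneg v, hvr.trans (min_le_left r ρ)⟩, ?_⟩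
      · rw [real_inner_smul_left]
        rw [← sub_nonneg] at key ⊢
        have hvpos : 0 < ‖v‖ := norm_pos_iff.mpr hv
        have : (‖v‖)⁻¹ * (inner ℝ v ξ : ℝ) - Real.cos θ
            = (‖v‖)⁻¹ * ((inner ℝ v ξ : ℝ) - Real.cos θ * ‖v‖) := by
          field_simp
        rw [this]
        exact mul_nonneg (inv_nonneg.mpr hvpos.le) (by linarith)
      · rw [smul_smul, mul_inv_cancel₀ (norm_ne_zero_iff.mpr hv), one_smul, hvdef]
        abel
  -- the inscribed ball is inside ball x ρ
  have hballball : ball c (t * σ) ⊆ ball x ρ := by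
    intro z hz
    rw [mem_ball] at hz ⊢
    have h1 : dist z x ≤ dist z c + dist c x := dist_triangle z c x
    have h2 : dist c x = t := by
      rw [hcdef, dist_eq_norm, add_sub_cancel_left, norm_smul, hξ, Real.norm_eq_abs,
        abs_of_pos ht]
      ring
    have hmin : min r ρ ≤ ρ := min_le_right r ρ
    nlinarith
  have hball : ball c (t * σ) ⊆ ball x ρ ∩ Ω :=
    subset_inter hballball (hballcone.trans hsub)
  -- the scalar inequality
  have hmm : min (r / R) 1 * ρ ≤ min r ρ := by
    refine le_min ?_ ?_
    · calc min (r / R) 1 * ρ ≤ r / R * ρ :=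
            mul_le_mul_of_nonneg_right (min_le_left _ _) hρ.le
        _ ≤ r := by
            rw [div_mul_eq_mul_div, div_le_iff₀ hR0]
            nlinarith
    · calc min (r / R) 1 * ρ ≤ 1 * ρ :=
            mul_le_mul_of_nonneg_right (min_le_right _ _) hρ.le
        _ = ρ := one_mul ρ
  have hle : σ * min (r / R) 1 / (1 + σ) * ρ ≤ t * σ := by
    rw [htdef, div_mul_eq_mul_div, div_mul_eq_mul_div, div_le_div_iff₀ hden hden]
    nlinarith [mul_nonneg hsin.le (sub_nonneg.mpr hmm)]
  have hpow : (σ * min (r / R) 1 / (1 + σ)) ^ d * ρ ^ d ≤ (t * σ) ^ d := by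
    rw [← mul_pow]
    exact pow_le_pow_left₀ (by positivity) hle d
  -- volume computations
  have hvol1 : volume (ball x ρ) =
      ENNReal.ofReal (ρ ^ d) * volume (ball (0 : EuclideanSpace ℝ (Fin d)) 1) := by
    simpa [finrank_euclideanSpace_fin] using Measure.addHaar_ball volume x hρ.le
  have hvol2 : volume (ball c (t * σ)) =
      ENNReal.ofReal ((t * σ) ^ d) * volume (ball (0 : EuclideanSpace ℝ (Fin d)) 1) := by
    simpa [finrank_euclideanSpace_fin] using
      Measure.addHaar_ball volume c (mul_pos ht hsin).le
  calc ENNReal.ofReal ((σ * min (r / R) 1 / (1 + σ)) ^ d) * volume (ball x ρ)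
      = ENNReal.ofReal ((σ * min (r / R) 1 / (1 + σ)) ^ d * ρ ^ d) *
          volume (ball (0 : EuclideanSpace ℝ (Fin d)) 1) := by
        rw [hvol1, ← mul_assoc, ← ENNReal.ofReal_mul (by positivity)]
    _ ≤ ENNReal.ofReal ((t * σ) ^ d) *
          volume (ball (0 : EuclideanSpace ℝ (Fin d)) 1) :=
        mul_le_mul_left (ENNReal.ofReal_le_ofReal hpow) _
    _ = volume (ball c (t * σ)) := hvol2.symm
    _ ≤ volume (ball x ρ ∩ Ω) := measure_mono hball
end
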